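/- The projective special linear group PSL(3,4) is not isomorphic to the alternating group A_8. -/

import Mathlib

set_option maxRecDepth 20000


inductive F4 : Type
  | O | I | A | B
deriving DecidableEq

instance : Fintype F4 := ⟨⟨(([F4.O, F4.I, F4.A, F4.B] : List F4) : Multiset F4), by decide⟩, fun x => by cases x <;> decide⟩

namespace F4

def add : F4 → F4 → F4
  | O, x => x
  | x, O => x
  | I, I => O | I, A => B | I, B => A
  | A, I => B | A, A => O | A, B => I
  | B, I => A | B, A => I | B, B => O

def mul : F4 → F4 → F4
  | O, _ => O
  | _, O => O
  | I, x => x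
  | x, I => x
  | A, A => B | A, B => I
  | B, A => I | B, B => A

def inv : F4 → F4
  | O => O | I => I | A => B | B => A

instance : Add F4 := ⟨add⟩
instance : Mul F4 := ⟨mul⟩
instance : Neg F4 := ⟨id⟩
instance : Inv F4 := ⟨inv⟩
instance : Zero F4 := ⟨O⟩
instance : One F4 := ⟨I⟩

instance field : Field F4 := Field.ofMinimalAxioms F4
  (by decide) (by decide) (by decide) (by decide) (by decide) (by decide)
  (by decide) (by decide) (by decide) ⟨O, I, by decide⟩

theorem card_f4 : Fintype.card F4 = 2 ^ 2 := rfl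

instance : CharP F4 2 := by
  have h2 : (2 : F4) = 0 := by decide
  exact (CharP.charP_iff_prime_eq_zero Nat.prime_two).mpr h2

end F4


theorem F4.one_eq : (1 : F4) = F4.I := rfl
theorem F4.zero_eq : (0 : F4) = F4.O := rfl
theorem F4.mul_eq : ∀ x y : F4, F4.mul x y = x * y := fun _ _ => rfl
theorem F4.add_eq : ∀ x y : F4, F4.add x y = x + y := fun _ _ => rfl
theorem F4.neg_eq : ∀ x : F4, -x = x := by decide

instance : Algebra (ZMod 2) F4 := ZMod.algebra F4 2

structure N9 : Type where
  a : F4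
  b : F4
  c : F4
  d : F4
  e : F4
  f : F4
  g : F4
  h : F4
  i : F4

namespace N9

def frc {α : Sort*} (x : F4) (k : F4 → α) : α :=
  match x with
  | .O => k .O
  | .I => k .I
  | .A => k .A
  | .B => k .B

theorem frc_eq {α : Sort*} (x : F4) (k : F4 → α) : frc x k = k x := by
  cases x <;> rfl

def check (a b c d e f g h i : F4) : Bool :=
  !(decide ((F4.add (F4.add (F4.mul a (F4.add (F4.mul e i) (F4.mul f h))) (F4.mul b (F4.add (F4.mul d i) (F4.mul f g)))) (F4.mul c (F4.add (F4.mul d h) (F4.mul e g)))) = F4.I)) ||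
  (frc (F4.add (F4.add (F4.mul a a) (F4.mul b d)) (F4.mul c g)) fun pa =>
  (frc (F4.add (F4.add (F4.mul a b) (F4.mul b e)) (F4.mul c h)) fun pb =>
  (frc (F4.add (F4.add (F4.mul a c) (F4.mul b f)) (F4.mul c i)) fun pc =>
  (frc (F4.add (F4.add (F4.mul d a) (F4.mul e d)) (F4.mul f g)) fun pd =>
  (frc (F4.add (F4.add (F4.mul d b) (F4.mul e e)) (F4.mul f h)) fun pe =>
  (frc (F4.add (F4.add (F4.mul d c) (F4.mul e f)) (F4.mul f i)) fun pf =>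
  (frc (F4.add (F4.add (F4.mul g a) (F4.mul h d)) (F4.mul i g)) fun pg =>
  (frc (F4.add (F4.add (F4.mul g b) (F4.mul h e)) (F4.mul i h)) fun ph =>
  (frc (F4.add (F4.add (F4.mul g c) (F4.mul h f)) (F4.mul i i)) fun pi =>
  (frc (F4.add (F4.add (F4.mul pa a) (F4.mul pb d)) (F4.mul pc g)) fun qa =>
  (frc (F4.add (F4.add (F4.mul pa b) (F4.mul pb e)) (F4.mul pc h)) fun qb =>
  (frc (F4.add (F4.add (F4.mul pa c) (F4.mul pb f)) (F4.mul pc i)) fun qc =>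
  (frc (F4.add (F4.add (F4.mul pd a) (F4.mul pe d)) (F4.mul pf g)) fun qd =>
  (frc (F4.add (F4.add (F4.mul pd b) (F4.mul pe e)) (F4.mul pf h)) fun qe =>
  (frc (F4.add (F4.add (F4.mul pd c) (F4.mul pe f)) (F4.mul pf i)) fun qf =>
  (frc (F4.add (F4.add (F4.mul pg a) (F4.mul ph d)) (F4.mul pi g)) fun qg =>
  (frc (F4.add (F4.add (F4.mul pg b) (F4.mul ph e)) (F4.mul pi h)) fun qh =>
  (frc (F4.add (F4.add (F4.mul pg c) (F4.mul ph f)) (F4.mul pi i)) fun qi =>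
  (frc (F4.add (F4.add (F4.mul qa qa) (F4.mul qb qd)) (F4.mul qc qg)) fun ra =>
  (frc (F4.add (F4.add (F4.mul qa qb) (F4.mul qb qe)) (F4.mul qc qh)) fun rb =>
  (frc (F4.add (F4.add (F4.mul qa qc) (F4.mul qb qf)) (F4.mul qc qi)) fun rc =>
  (frc (F4.add (F4.add (F4.mul qd qa) (F4.mul qe qd)) (F4.mul qf qg)) fun rd =>
  (frc (F4.add (F4.add (F4.mul qd qb) (F4.mul qe qe)) (F4.mul qf qh)) fun re =>
  (frc (F4.add (F4.add (F4.mul qd qc) (F4.mul qe qf)) (F4.mul qf qi)) fun rf =>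
  (frc (F4.add (F4.add (F4.mul qg qa) (F4.mul qh qd)) (F4.mul qi qg)) fun rg =>
  (frc (F4.add (F4.add (F4.mul qg qb) (F4.mul qh qe)) (F4.mul qi qh)) fun rh =>
  (frc (F4.add (F4.add (F4.mul qg qc) (F4.mul qh qf)) (F4.mul qi qi)) fun ri =>
  (!((((((((decide (rb = F4.O) && decide (rc = F4.O)) && decide (rd = F4.O)) && decide (rf = F4.O)) && decide (rg = F4.O)) && decide (rh = F4.O)) && decide (ra = re)) && decide (re = ri))) || (((((((((decide (pb = F4.O) && decide (pc = F4.O)) && decide (pd = F4.O)) && decide (pf = F4.O)) && decide (pg = F4.O)) && decide (ph = F4.O)) && decide (pa = pe)) && decide (pe = pi))) || ((((((((decide (qb = F4.O) && decide (qc = F4.O)) && decide (qd = F4.O)) && decide (qf = F4.O)) && decide (qg = F4.O)) && decide (qh = F4.O)) && decide (qa = qe)) && decide (qe = qi))))))))))))))))))))))))))))))))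


def mul (x y : N9) : N9 where
  a := F4.add (F4.add (F4.mul x.a y.a) (F4.mul x.b y.d)) (F4.mul x.c y.g)
  b := F4.add (F4.add (F4.mul x.a y.b) (F4.mul x.b y.e)) (F4.mul x.c y.h)
  c := F4.add (F4.add (F4.mul x.a y.c) (F4.mul x.b y.f)) (F4.mul x.c y.i)
  d := F4.add (F4.add (F4.mul x.d y.a) (F4.mul x.e y.d)) (F4.mul x.f y.g)
  e := F4.add (F4.add (F4.mul x.d y.b) (F4.mul x.e y.e)) (F4.mul x.f y.h)
  f := F4.add (F4.add (F4.mul x.d y.c) (F4.mul x.e y.f)) (F4.mul x.f y.i)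
  g := F4.add (F4.add (F4.mul x.g y.a) (F4.mul x.h y.d)) (F4.mul x.i y.g)
  h := F4.add (F4.add (F4.mul x.g y.b) (F4.mul x.h y.e)) (F4.mul x.i y.h)
  i := F4.add (F4.add (F4.mul x.g y.c) (F4.mul x.h y.f)) (F4.mul x.i y.i)


def det (x : N9) : F4 :=
  F4.add (F4.add (F4.mul x.a (F4.add (F4.mul x.e x.i) (F4.mul x.f x.h))) (F4.mul x.b (F4.add (F4.mul x.d x.i) (F4.mul x.f x.g)))) (F4.mul x.c (F4.add (F4.mul x.d x.h) (F4.mul x.e x.g)))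

def x2 (x : N9) : N9 := mul x x
def x3 (x : N9) : N9 := mul (x2 x) x
def x6 (x : N9) : N9 := mul (x3 x) (x3 x)

def isScalarB (x : N9) : Bool :=
  decide (x.b = F4.O) && decide (x.c = F4.O) && decide (x.d = F4.O) && decide (x.f = F4.O) &&
    decide (x.g = F4.O) && decide (x.h = F4.O) && decide (x.a = x.e) && decide (x.e = x.i)

def IsScalar (x : N9) : Prop :=
  x.b = F4.O ∧ x.c = F4.O ∧ x.d = F4.O ∧ x.f = F4.O ∧ x.g = F4.O ∧ x.h = F4.O ∧
    x.a = x.e ∧ x.e = x.i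

theorem isScalarB_iff (x : N9) : isScalarB x = true ↔ IsScalar x := by
  unfold isScalarB IsScalar
  simp [Bool.and_eq_true, decide_eq_true_iff, and_assoc]

def checkB (x : N9) : Bool :=
  !(decide (det x = F4.I)) || (!(isScalarB (x6 x)) || (isScalarB (x2 x) || isScalarB (x3 x)))

theorem check_eq_checkB (a b c d e f g h i : F4) :
    check a b c d e f g h i = checkB ⟨a,b,c,d,e,f,g,h,i⟩ := by
  simp only [check, frc_eq]
  rfl

theorem isScalarB_false_iff (x : N9) : isScalarB x = false ↔ ¬ IsScalar x := by
  rw [← isScalarB_iff, Bool.eq_false_iff]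

theorem checkB_iff (x : N9) :
    checkB x = true ↔ (det x = F4.I → IsScalar (x6 x) → IsScalar (x2 x) ∨ IsScalar (x3 x)) := by
  unfold checkB
  simp only [Bool.or_eq_true, Bool.not_eq_true', decide_eq_false_iff_not, isScalarB_iff,
    isScalarB_false_iff, Bool.not_eq_true, decide_eq_true_iff]
  tauto

def allF4 (k : F4 → Bool) : Bool := k .O && k .I && k .A && k .B

theorem forall_of_allF4 {k : F4 → Bool} (h : allF4 k = true) : ∀ x, k x = true := by
  intro x
  unfold allF4 at h
  simp only [Bool.and_eq_true] at h
  cases x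
  exacts [h.1.1.1, h.1.1.2, h.1.2, h.2]

set_option maxHeartbeats 12000000 in
theorem check_O : (allF4 fun b => allF4 fun c => allF4 fun d => allF4 fun e => allF4 fun f => allF4 fun g => allF4 fun h => allF4 fun i => check F4.O b c d e f g h i) = true := by decide +kernel

set_option maxHeartbeats 12000000 in
theorem check_I : (allF4 fun b => allF4 fun c => allF4 fun d => allF4 fun e => allF4 fun f => allF4 fun g => allF4 fun h => allF4 fun i => check F4.I b c d e f g h i) = true := by decide +kernel

set_option maxHeartbeats 12000000 in
theorem check_A : (allF4 fun b => allF4 fun c => allF4 fun d => allF4 fun e => allF4 fun f => allF4 fun g => allF4 fun h => allF4 fun i => check F4.A b c d e f g h i) = true := by decide +kernel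

set_option maxHeartbeats 12000000 in
theorem check_B : (allF4 fun b => allF4 fun c => allF4 fun d => allF4 fun e => allF4 fun f => allF4 fun g => allF4 fun h => allF4 fun i => check F4.B b c d e f g h i) = true := by decide +kernel

theorem check_all : ∀ a b c d e f g h i : F4, check a b c d e f g h i = true := by
  intro a b c d e f g h i
  have H : (allF4 fun b => allF4 fun c => allF4 fun d => allF4 fun e => allF4 fun f =>
      allF4 fun g => allF4 fun h => allF4 fun i => check a b c d e f g h i) = true := by
    cases a
    exacts [check_O, check_I, check_A, check_B]
  exact forall_of_allF4 (forall_of_allF4 (forall_of_allF4 (forall_of_allF4 (forall_of_allF4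
    (forall_of_allF4 (forall_of_allF4 (forall_of_allF4 H b) c) d) e) f) g) h) i



def toMat (x : N9) : Matrix (Fin 3) (Fin 3) F4 :=
  !![x.a, x.b, x.c; x.d, x.e, x.f; x.g, x.h, x.i]

theorem toMat_mul (x y : N9) : toMat (mul x y) = toMat x * toMat y := by
  simp only [toMat, Matrix.mul_fin_three, mul, F4.mul_eq, F4.add_eq]

theorem det_toMat (x : N9) : (toMat x).det = det x := by
  simp [toMat, Matrix.det_fin_three, det, F4.mul_eq, F4.add_eq, sub_eq_add_neg, F4.neg_eq]
  ring

theorem scalar_explicit (s : F4) :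
    Matrix.scalar (Fin 3) s = !![s, 0, 0; 0, s, 0; 0, 0, s] := by
  ext i j
  fin_cases i <;> fin_cases j <;>
    simp [Matrix.scalar_apply, Matrix.diagonal, Matrix.one_apply, Matrix.vecHead, Matrix.vecTail]

theorem isScalar_iff (x : N9) :
    IsScalar x ↔ ∃ s : F4, toMat x = Matrix.scalar (Fin 3) s := by
  constructor
  · rintro ⟨h1, h2, h3, h4, h5, h6, h7, h8⟩
    refine ⟨x.a, ?_⟩
    rw [scalar_explicit, toMat, F4.zero_eq]
    rw [h1, h2, h3, h4, h5, h6, h7, h8]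
  · rintro ⟨s, hs⟩
    rw [scalar_explicit, toMat] at hs
    have H : ∀ i j, (!![x.a, x.b, x.c; x.d, x.e, x.f; x.g, x.h, x.i] : Matrix (Fin 3) (Fin 3) F4) i j
        = (!![s, 0, 0; 0, s, 0; 0, 0, s] : Matrix (Fin 3) (Fin 3) F4) i j := fun i j => by rw [hs]
    have h00 := H 0 0
    have h01 := H 0 1
    have h02 := H 0 2
    have h10 := H 1 0
    have h11 := H 1 1
    have h12 := H 1 2
    have h20 := H 2 0
    have h21 := H 2 1
    have h22 := H 2 2
    simp only [Matrix.cons_val', Matrix.cons_val_zero, Matrix.cons_val_one, Matrix.head_cons,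
      Matrix.empty_val', Matrix.cons_val_fin_one, Matrix.head_fin_const, Matrix.cons_val_two,
      Matrix.tail_cons, Matrix.of_apply] at h00 h01 h02 h10 h11 h12 h20 h21 h22
    rw [F4.zero_eq] at h01 h02 h10 h12 h20 h21
    exact ⟨h01, h02, h10, h12, h20, h21, h00.trans h11.symm, h11.trans h22.symm⟩

theorem matrix_key (M : Matrix (Fin 3) (Fin 3) F4) (hdet : M.det = 1)
    (h6 : ∃ s, M ^ 6 = Matrix.scalar (Fin 3) s) :
    (∃ s, M ^ 2 = Matrix.scalar (Fin 3) s) ∨ (∃ s, M ^ 3 = Matrix.scalar (Fin 3) s) := by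
  set x : N9 := ⟨M 0 0, M 0 1, M 0 2, M 1 0, M 1 1, M 1 2, M 2 0, M 2 1, M 2 2⟩ with hx
  have hM : M = toMat x := Matrix.eta_fin_three M
  have h2 : M ^ 2 = toMat (x2 x) := by rw [pow_two, hM, x2, toMat_mul]
  have h3 : M ^ 3 = toMat (x3 x) := by
    rw [x3, toMat_mul, ← h2, ← hM, ← pow_succ]
  have h6' : M ^ 6 = toMat (x6 x) := by
    rw [x6, toMat_mul, ← h3, ← pow_add]
  have hkey : det x = F4.I → IsScalar (x6 x) → IsScalar (x2 x) ∨ IsScalar (x3 x) :=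
    (checkB_iff x).mp ((check_eq_checkB x.a x.b x.c x.d x.e x.f x.g x.h x.i).symm.trans
      (check_all x.a x.b x.c x.d x.e x.f x.g x.h x.i))
  have hdx : det x = F4.I := by
    rw [← det_toMat, ← hM, hdet, F4.one_eq]
  have h6s : IsScalar (x6 x) := (isScalar_iff _).mpr (by rwa [← h6'])
  rcases hkey hdx h6s with h | h
  · exact Or.inl (by rw [h2]; exact (isScalar_iff _).mp h)
  · exact Or.inr (by rw [h3]; exact (isScalar_iff _).mp h)

end N9

noncomputable def f4Equiv : F4 ≃+* GaloisField 2 2 :=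
  (GaloisField.algEquivGaloisFieldOfFintype 2 2 F4.card_f4).toRingEquiv

open Matrix in
noncomputable def slEquiv :
    SpecialLinearGroup (Fin 3) F4 ≃* SpecialLinearGroup (Fin 3) (GaloisField 2 2) where
  toFun := SpecialLinearGroup.map (f4Equiv : F4 →+* GaloisField 2 2)
  invFun := SpecialLinearGroup.map (f4Equiv.symm : GaloisField 2 2 →+* F4)
  left_inv A := Subtype.ext <| by
    ext i j
    simp [SpecialLinearGroup.map_apply_coe]
  right_inv A := Subtype.ext <| by
    ext i j
    simp [SpecialLinearGroup.map_apply_coe]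
  map_mul' := map_mul _

theorem map_center_of_mulEquiv {G H : Type*} [Group G] [Group H] (e : G ≃* H) :
    (Subgroup.center G).map e.toMonoidHom = Subgroup.center H := by
  ext h
  simp only [Subgroup.mem_map]
  constructor
  · rintro ⟨g, hg, rfl⟩
    rw [Subgroup.mem_center_iff] at hg ⊢
    intro k
    have := hg (e.symm k)
    have := congrArg e this
    simpa [map_mul] using this
  · intro hh
    refine ⟨e.symm h, ?_, by simp⟩
    rw [Subgroup.mem_center_iff] at hh ⊢
    intro k
    have := hh (e k)
    have := congrArg e.symm this
    simpa [map_mul] using this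

open Matrix in
noncomputable def quotEquiv :
    (SpecialLinearGroup (Fin 3) F4 ⧸ Subgroup.center (SpecialLinearGroup (Fin 3) F4)) ≃*
      (SpecialLinearGroup (Fin 3) (GaloisField 2 2) ⧸
        Subgroup.center (SpecialLinearGroup (Fin 3) (GaloisField 2 2))) :=
  QuotientGroup.congr _ _ slEquiv (map_center_of_mulEquiv slEquiv)

def σ8 : Equiv.Perm (Fin 8) :=
  Equiv.swap 0 1 * Equiv.swap 2 3 * (Equiv.swap 4 5 * Equiv.swap 4 6)

theorem σ8_sign : Equiv.Perm.sign σ8 = 1 := by decide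

theorem σ8_pow6 : σ8 ^ 6 = 1 := by decide
theorem σ8_pow2 : σ8 ^ 2 ≠ 1 := by decide
theorem σ8_pow3 : σ8 ^ 3 ≠ 1 := by decide

/-- The projective special linear group `PSL(3,4)`: the special linear group of degree 3
over the field with 4 elements, modulo its center. -/
def PSL34 : Type :=
  Matrix.SpecialLinearGroup (Fin 3) (GaloisField 2 2) ⧸
    Subgroup.center (Matrix.SpecialLinearGroup (Fin 3) (GaloisField 2 2))

noncomputable instance : Group PSL34 :=
  inferInstanceAs (Group (Matrix.SpecialLinearGroup (Fin 3) (GaloisField 2 2) ⧸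
    Subgroup.center (Matrix.SpecialLinearGroup (Fin 3) (GaloisField 2 2))))


theorem PSL34_not_iso_A8 : ¬ Nonempty (PSL34 ≃* alternatingGroup (Fin 8)) := by
  rintro ⟨e⟩
  have e' : (Matrix.SpecialLinearGroup (Fin 3) (GaloisField 2 2) ⧸
      Subgroup.center (Matrix.SpecialLinearGroup (Fin 3) (GaloisField 2 2))) ≃*
      alternatingGroup (Fin 8) := e
  set ψ := quotEquiv.trans e' with hψ
  -- the order-6 element of A8
  have hσmem : σ8 ∈ alternatingGroup (Fin 8) := by
    rw [Equiv.Perm.mem_alternatingGroup]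
    exact σ8_sign
  set g : alternatingGroup (Fin 8) := ⟨σ8, hσmem⟩ with hg
  have hg6 : g ^ 6 = 1 := Subtype.ext (by
    rw [SubmonoidClass.coe_pow]
    exact σ8_pow6)
  have hg2 : g ^ 2 ≠ 1 := fun h => σ8_pow2 (by
    have := congrArg (Subtype.val) h
    rwa [SubmonoidClass.coe_pow] at this)
  have hg3 : g ^ 3 ≠ 1 := fun h => σ8_pow3 (by
    have := congrArg (Subtype.val) h
    rwa [SubmonoidClass.coe_pow] at this)
  set y := ψ.symm g with hy
  have hψy : ψ y = g := ψ.apply_symm_apply g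
  have hy6 : y ^ 6 = 1 := by
    apply ψ.injective
    rw [map_pow, hψy, map_one, hg6]
  have hy2 : y ^ 2 ≠ 1 := fun h => hg2 (by rw [← hψy, ← map_pow, h, map_one])
  have hy3 : y ^ 3 ≠ 1 := fun h => hg3 (by rw [← hψy, ← map_pow, h, map_one])
  obtain ⟨m, hm⟩ := QuotientGroup.mk'_surjective
    (Subgroup.center (Matrix.SpecialLinearGroup (Fin 3) F4)) y
  have hmpow : ∀ k : ℕ, (QuotientGroup.mk' _ ) (m ^ k) = y ^ k := fun k => by
    rw [map_pow, hm]
  have hm6 : m ^ 6 ∈ Subgroup.center (Matrix.SpecialLinearGroup (Fin 3) F4) := by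
    rw [← QuotientGroup.eq_one_iff]
    exact (hmpow 6).trans hy6
  obtain ⟨r, hr3, hr⟩ := Matrix.SpecialLinearGroup.mem_center_iff.mp hm6
  have hM6 : (m.val : Matrix (Fin 3) (Fin 3) F4) ^ 6 = Matrix.scalar (Fin 3) r := by
    rw [← Matrix.SpecialLinearGroup.coe_pow, hr]
  have hkey := N9.matrix_key m.val m.property ⟨r, hM6⟩
  have hcontr : ∀ k : ℕ, (∃ s, (m.val : Matrix (Fin 3) (Fin 3) F4) ^ k
      = Matrix.scalar (Fin 3) s) → y ^ k = 1 := by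
    rintro k ⟨s, hs⟩
    rw [← hmpow k, QuotientGroup.mk'_apply, QuotientGroup.eq_one_iff]
    apply Matrix.SpecialLinearGroup.mem_center_iff.mpr
    refine ⟨s, ?_, by rw [Matrix.SpecialLinearGroup.coe_pow, hs]⟩
    have hdet : ((m.val : Matrix (Fin 3) (Fin 3) F4) ^ k).det = 1 := by
      rw [Matrix.det_pow, m.property, one_pow]
    rw [hs] at hdet
    simpa using hdet
  rcases hkey with h | h
  · exact hy2 (hcontr 2 h)
  · exact hy3 (hcontr 3 h)
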